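/- Let G be a graph, J a 2|E(H)|-edge-connected subgraph of G, and G' the graph obtained from G by contracting V(J) to a single vertex. If G' contains H as a strong immersion, then G contains H as a strong immersion. -/

import Mathlib

/-- A finite multigraph without loops: a vertex type, an edge type, and an
endpoint map assigning to each edge an unordered pair of distinct vertices. -/
structure Multigraph where
  V : Type
  E : Type
  [finV : Finite V]
  [finE : Finite E]
  ends : E → Sym2 V
  no_loops : ∀ e, ¬ (ends e).IsDiag

attribute [instance] Multigraph.finV Multigraph.finE

namespace Multigraph

variable (G : Multigraph)

/-- The set of edges with exactly one endpoint in `X`. -/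
def edgeBoundary (X : Set G.V) : Set G.E :=
  {e | ∃ u v, G.ends e = s(u, v) ∧ u ∈ X ∧ v ∉ X}

/-- The degree of a vertex: the number of edges incident with it. -/
noncomputable def degree (v : G.V) : ℕ := {e | v ∈ G.ends e}.ncard

/-- Two vertices are adjacent if some edge joins them. -/
def Adj (u v : G.V) : Prop := ∃ e, G.ends e = s(u, v)

/-- Walks in a multigraph. -/
inductive Walk : G.V → G.V → Type
  | nil (v : G.V) : Walk v v
  | cons {u v w : G.V} (e : G.E) (h : G.ends e = s(u, v)) (p : Walk v w) : Walk u w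

variable {G}

/-- The list of edges of a walk. -/
def Walk.edges : ∀ {u v : G.V}, G.Walk u v → List G.E
  | _, _, .nil _ => []
  | _, _, .cons e _ p => e :: p.edges

/-- The list of vertices of a walk, from the first to the last. -/
def Walk.support : ∀ {u v : G.V}, G.Walk u v → List G.V
  | _, v, .nil _ => [v]
  | u, _, .cons _ _ p => u :: p.support

/-- A walk is a path if it repeats no vertex. -/
def Walk.IsPath {u v : G.V} (p : G.Walk u v) : Prop := p.support.Nodup

/-- The internal vertices of a walk (all vertices except the two endpoints). -/
def Walk.internals {u v : G.V} (p : G.Walk u v) : List G.V := p.support.tail.dropLast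

/-- The walk avoids the edge set `F`. -/
def Walk.avoids {u v : G.V} (p : G.Walk u v) (F : Set G.E) : Prop := ∀ e ∈ p.edges, e ∉ F

variable (G)

/-- Any two vertices can be joined by a walk avoiding the edge set `F`. -/
def ConnectedAvoiding (F : Set G.E) : Prop :=
  ∀ u v : G.V, ∃ p : G.Walk u v, p.avoids F

/-- A multigraph is connected if any two vertices are joined by a walk. -/
def Connected : Prop := G.ConnectedAvoiding ∅

/-- A multigraph is `k`-edge-connected if it has at least two vertices and
deleting any fewer than `k` edges leaves it connected. -/
def EdgeConnected (k : ℕ) : Prop :=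
  Nontrivial G.V ∧ ∀ F : Set G.E, F.ncard < k → G.ConnectedAvoiding F

end Multigraph

open Multigraph

/-- The data of a (weak) immersion of `H` in `G`: an injection of the vertices and
pairwise edge-disjoint composite paths, one for each edge of `H`. -/
structure ImmersionData (H G : Multigraph) where
  π : H.V → G.V
  inj : Function.Injective π
  pathEnds : H.E → G.V × G.V
  path : ∀ f : H.E, G.Walk (pathEnds f).1 (pathEnds f).2
  ends_eq : ∀ f : H.E, Sym2.map π (H.ends f) = s((pathEnds f).1, (pathEnds f).2)
  isPath : ∀ f, (path f).IsPath
  edge_disj : ∀ f f', f ≠ f' → ∀ e, e ∈ (path f).edges → e ∉ (path f').edges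

/-- `G` contains `H` as a (weak) immersion. -/
def Immersion (H G : Multigraph) : Prop := Nonempty (ImmersionData H G)

/-- An immersion is strong if no branch vertex is an internal vertex of a composite path. -/
def ImmersionData.Strong {H G : Multigraph} (I : ImmersionData H G) : Prop :=
  ∀ f : H.E, ∀ v : H.V, I.π v ∉ (I.path f).internals

/-- `G` contains `H` as a strong immersion. -/
def StrongImmersion (H G : Multigraph) : Prop := ∃ I : ImmersionData H G, I.Strong

/-- `G` contains `H` as a topological minor: an immersion whose composite paths are
internally vertex-disjoint and avoid the branch vertices internally. -/
def TopologicalMinor (H G : Multigraph) : Prop :=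
  ∃ I : ImmersionData H G,
    (∀ f v, I.π v ∉ (I.path f).internals) ∧
    (∀ f f', f ≠ f' → ∀ w, w ∈ (I.path f).internals → w ∉ (I.path f').internals)

/-- The complete multigraph `K t`: one edge for every unordered pair of distinct vertices. -/
def cliqueGraph (t : ℕ) : Multigraph where
  V := Fin t
  E := {p : Sym2 (Fin t) // ¬ p.IsDiag}
  ends := Subtype.val
  no_loops := fun e => e.2

/-- The multigraph `S_{k,n}`: vertices `x_1, …, x_n` (`some i`) and `y` (`none`), with
exactly `k` parallel edges between each `x_i` and `y`. -/
def starMulti (k n : ℕ) : Multigraph where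
  V := Option (Fin n)
  E := Fin n × Fin k
  ends := fun p => s(some p.1, none)
  no_loops := fun e h => by simp [Sym2.mk_isDiag_iff] at h

/-- The multigraph `P_{k,n}`: a path on `n` vertices with each edge replaced by `k`
parallel edges. -/
def pathMulti (k n : ℕ) : Multigraph where
  V := Fin n
  E := Fin (n - 1) × Fin k
  ends := fun p => s(⟨p.1.1, by have := p.1.2; omega⟩, ⟨p.1.1 + 1, by have := p.1.2; omega⟩)
  no_loops := fun e h => by simp [Sym2.mk_isDiag_iff, Fin.ext_iff] at h

namespace Multigraph

/-- A subgraph of a multigraph, given by a set of vertices and a set of edges with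
both endpoints among those vertices. -/
structure Sub (G : Multigraph) where
  verts : Set G.V
  edgeSet : Set G.E
  closed : ∀ e ∈ edgeSet, ∀ v ∈ G.ends e, v ∈ verts

/-- `(A, B)` is a separation: `A` and `B` are edge-disjoint subgraphs whose union is `G`. -/
def IsSeparation {G : Multigraph} (A B : G.Sub) : Prop :=
  A.verts ∪ B.verts = Set.univ ∧ A.edgeSet ∪ B.edgeSet = Set.univ ∧ A.edgeSet ∩ B.edgeSet = ∅

/-- The order of a separation `(A, B)`. -/
noncomputable def sepOrder {G : Multigraph} (A B : G.Sub) : ℕ := (A.verts ∩ B.verts).ncard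

/-- `𝒯` is a tangle of order `Θ` in `G`. -/
def IsTangle (G : Multigraph) (𝒯 : Set (G.Sub × G.Sub)) (Θ : ℕ) : Prop :=
  (∀ p ∈ 𝒯, IsSeparation p.1 p.2 ∧ sepOrder p.1 p.2 < Θ) ∧
  (∀ A B : G.Sub, IsSeparation A B → sepOrder A B < Θ → (A, B) ∈ 𝒯 ∨ (B, A) ∈ 𝒯) ∧
  (∀ p₁ ∈ 𝒯, ∀ p₂ ∈ 𝒯, ∀ p₃ ∈ 𝒯,
    ¬ (p₁.1.verts ∪ p₂.1.verts ∪ p₃.1.verts = Set.univ ∧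
       p₁.1.edgeSet ∪ p₂.1.edgeSet ∪ p₃.1.edgeSet = Set.univ)) ∧
  (∀ p ∈ 𝒯, p.1.verts ≠ Set.univ)

/-- The line graph of a multigraph: vertices are the edges of `G`, with an edge of the
line graph for each unordered pair of distinct edges of `G` sharing an endpoint. -/
def lineGraph (G : Multigraph) : Multigraph where
  V := G.E
  E := {p : Sym2 G.E // ¬ p.IsDiag ∧ ∃ e f, p = s(e, f) ∧ ∃ v, v ∈ G.ends e ∧ v ∈ G.ends f}
  ends := Subtype.val
  no_loops := fun e => e.2.1

/-- `G'` (with projection `q` and new vertex `x`) is obtained from `G` by consolidating the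
vertex set `X`: delete all edges with both ends in `X` and identify `X` to the vertex `x`. -/
def IsConsolidation (G : Multigraph) (X : Set G.V) (G' : Multigraph)
    (q : G.V → G'.V) (x : G'.V) : Prop :=
  Function.Surjective q ∧ (∀ a ∈ X, q a = x) ∧ (∀ a ∉ X, q a ≠ x) ∧
  (∀ a b, a ∉ X → b ∉ X → q a = q b → a = b) ∧
  ∃ φ : {e : G.E // ∃ w ∈ G.ends e, w ∉ X} ≃ G'.E,
    ∀ e, G'.ends (φ e) = Sym2.map q (G.ends e.1)

/-- An `X`-spider of order `k` with body `v`: `k` pairwise edge-disjoint paths from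
`v ∉ X` to `X`, none of them having an internal vertex in `X`. -/
def HasSpiderWithBody (G : Multigraph) (X : Set G.V) (k : ℕ) (v : G.V) : Prop :=
  v ∉ X ∧ ∃ (tgt : Fin k → G.V) (P : ∀ i, G.Walk v (tgt i)),
    (∀ i, tgt i ∈ X) ∧ (∀ i, (P i).IsPath) ∧
    (∀ i, ∀ w ∈ (P i).internals, w ∉ X) ∧
    (∀ i j, i ≠ j → ∀ e ∈ (P i).edges, e ∉ (P j).edges)

/-- `G` contains an `X`-spider of order `k`. -/
def HasXSpider (G : Multigraph) (X : Set G.V) (k : ℕ) : Prop :=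
  ∃ v, HasSpiderWithBody G X k v

/-- A model of the complete graph `K t` in `G`: `t` pairwise disjoint nonempty connected
branch sets with an edge of `G` between any two of them. -/
def IsCliqueModel (G : Multigraph) (t : ℕ) (X : Fin t → Set G.V) : Prop :=
  (∀ i, (X i).Nonempty) ∧
  (∀ i j, i ≠ j → Disjoint (X i) (X j)) ∧
  (∀ i, ∀ u ∈ X i, ∀ v ∈ X i, ∃ p : G.Walk u v, ∀ w ∈ p.support, w ∈ X i) ∧
  (∀ i j, i ≠ j → ∃ e, ∃ a ∈ X i, ∃ b ∈ X j, G.ends e = s(a, b))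

/-- The canonical separation `(A, B)` of the line graph of `G` associated to a vertex
set `U ⊆ V(G)`. -/
def IsCanonicalSeparation (G : Multigraph) (U : Set G.V) (A B : G.lineGraph.Sub) : Prop :=
  A.verts = {e : G.E | ∃ w ∈ G.ends e, w ∈ U} ∧
  A.edgeSet = {p : G.lineGraph.E | ∀ q ∈ G.lineGraph.ends p, ∃ w ∈ G.ends q, w ∈ U} ∧
  B.verts = {e : G.E | ∃ w ∈ G.ends e, w ∉ U} ∧
  B.edgeSet = {p : G.lineGraph.E | (∀ q ∈ G.lineGraph.ends p, ∃ w ∈ G.ends q, w ∉ U) ∧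
    ¬ (∀ q ∈ G.lineGraph.ends p, q ∈ G.edgeBoundary U)}

/-- A `k`-star with center `u`: a set of `k` edges all incident with `u`. -/
def IsKStarWithCenter (G : Multigraph) (F : Set G.E) (k : ℕ) (u : G.V) : Prop :=
  F.ncard = k ∧ ∀ e ∈ F, u ∈ G.ends e

/-- A set `F` of vertices of the line graph of `G` is free with respect to a tangle `𝒯`
in the line graph if no separation in `𝒯` of order less than `|F|` has `F` on its small side. -/
def FreeInTangle (G : Multigraph) (𝒯 : Set (G.lineGraph.Sub × G.lineGraph.Sub))
    (F : Set G.E) : Prop :=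
  ¬ ∃ p ∈ 𝒯, sepOrder p.1 p.2 < F.ncard ∧ F ⊆ p.1.verts

end Multigraph


namespace Multigraph

variable {G : Multigraph}

namespace Walk

@[simp] lemma edges_nil (v : G.V) : (Walk.nil v : G.Walk v v).edges = [] := rfl
@[simp] lemma edges_cons {u v w : G.V} (e : G.E) (h : G.ends e = s(u, v)) (p : G.Walk v w) :
    (Walk.cons e h p).edges = e :: p.edges := rfl
@[simp] lemma support_nil (v : G.V) : (Walk.nil v : G.Walk v v).support = [v] := rfl
@[simp] lemma support_cons {u v w : G.V} (e : G.E) (h : G.ends e = s(u, v)) (p : G.Walk v w) :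
    (Walk.cons e h p).support = u :: p.support := rfl

lemma support_ne_nil {u v : G.V} (p : G.Walk u v) : p.support ≠ [] := by
  cases p <;> simp

lemma start_mem_support {u v : G.V} (p : G.Walk u v) : u ∈ p.support := by
  cases p <;> simp

lemma end_mem_support {u v : G.V} (p : G.Walk u v) : v ∈ p.support := by
  induction p with
  | nil v => simp
  | cons e h p ih => simp [ih]

/-- the support is some list with the last vertex appended -/
lemma exists_support_concat {u v : G.V} (p : G.Walk u v) :
    ∃ l : List G.V, p.support = l ++ [v] := by
  induction p with
  | nil v => exact ⟨[], rfl⟩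
  | cons e h p ih =>
    rename_i u' v' w'
    obtain ⟨l, hl⟩ := ih
    exact ⟨u' :: l, by simp [hl]⟩

/-- copy a walk along endpoint equalities -/
def copy {u v u' v' : G.V} (p : G.Walk u v) (hu : u = u') (hv : v = v') : G.Walk u' v' :=
  hu ▸ hv ▸ p

@[simp] lemma support_copy {u v u' v' : G.V} (p : G.Walk u v) (hu : u = u') (hv : v = v') :
    (p.copy hu hv).support = p.support := by subst hu; subst hv; rfl

@[simp] lemma edges_copy {u v u' v' : G.V} (p : G.Walk u v) (hu : u = u') (hv : v = v') :
    (p.copy hu hv).edges = p.edges := by subst hu; subst hv; rfl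

def append : ∀ {u v w : G.V}, G.Walk u v → G.Walk v w → G.Walk u w
  | _, _, _, .nil _, q => q
  | _, _, _, .cons e h p, q => .cons e h (p.append q)

@[simp] lemma edges_append {u v w : G.V} (p : G.Walk u v) (q : G.Walk v w) :
    (p.append q).edges = p.edges ++ q.edges := by
  induction p with
  | nil => rfl
  | cons e h p ih => simp [append, ih]

lemma mem_support_append {u v w : G.V} (p : G.Walk u v) (q : G.Walk v w) (y : G.V) :
    y ∈ (p.append q).support ↔ y ∈ p.support ∨ y ∈ q.support := by
  induction p with
  | nil v =>
    simp only [append, support_nil, List.mem_singleton]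
    constructor
    · intro h; exact Or.inr h
    · rintro (rfl | h)
      · exact q.start_mem_support
      · exact h
  | cons e h p ih =>
    simp only [append, support_cons, List.mem_cons, ih, or_assoc]

/-- reverse of a walk, as an existence statement -/
lemma exists_reverse {u v : G.V} (p : G.Walk u v) :
    ∃ r : G.Walk v u, (∀ y, y ∈ r.support ↔ y ∈ p.support) ∧
      (∀ e, e ∈ r.edges ↔ e ∈ p.edges) := by
  induction p with
  | nil v => exact ⟨.nil v, by simp, by simp⟩
  | cons e h p ih =>
    obtain ⟨r, hs, he⟩ := ih
    refine ⟨r.append (.cons e (by rw [h, Sym2.eq_swap]) (.nil _)), ?_, ?_⟩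
    · intro y
      rw [mem_support_append]
      simp only [support_cons, support_nil, List.mem_cons, List.mem_singleton,
        List.not_mem_nil, or_false, hs y]
      constructor
      · rintro (h1 | h1 | h1) <;> simp_all [start_mem_support, end_mem_support]
      · rintro (h1 | h1) <;> simp_all [start_mem_support, end_mem_support]
    · intro e'
      simp only [edges_append, edges_cons, edges_nil, List.mem_append, List.mem_cons,
        List.not_mem_nil, or_false, List.mem_singleton, he e']
      tauto

/-- extract a walk from `y` to the end, with support a sublist -/
lemma exists_suffix : ∀ {u v : G.V} (p : G.Walk u v) (y : G.V), y ∈ p.support →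
    ∃ r : G.Walk y v, r.support.Sublist p.support ∧ ∀ e ∈ r.edges, e ∈ p.edges := by
  intro u v p
  induction p with
  | nil v =>
    intro y hy
    simp only [support_nil, List.mem_singleton] at hy
    subst hy
    exact ⟨.nil _, by simp, by simp⟩
  | cons e h p ih =>
    rename_i u' v' w'
    intro y hy
    rcases eq_or_ne y u' with rfl | hne
    · exact ⟨.cons e h p, List.Sublist.refl _, fun _ he => he⟩
    · have hy' : y ∈ p.support := by
        simp only [support_cons, List.mem_cons] at hy
        tauto
      obtain ⟨r, hs, he⟩ := ih y hy'
      exact ⟨r, hs.trans (List.sublist_cons_self _ _), fun e' he' => by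
        simp only [edges_cons, List.mem_cons]; exact Or.inr (he e' he')⟩

/-- de-looping: from any walk extract a path with smaller support and edges -/
lemma exists_path {u v : G.V} (p : G.Walk u v) :
    ∃ r : G.Walk u v, r.IsPath ∧ (∀ y ∈ r.support, y ∈ p.support) ∧
      (∀ e ∈ r.edges, e ∈ p.edges) := by
  induction p with
  | nil v => exact ⟨.nil v, by simp [IsPath], by simp, by simp⟩
  | cons e h p ih =>
    rename_i u' v' w'
    obtain ⟨r, hr, hrs, hre⟩ := ih
    by_cases hu : u' ∈ r.support
    · obtain ⟨r', hs', he'⟩ := exists_suffix r u' hu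
      refine ⟨r', hs'.nodup hr, ?_, ?_⟩
      · intro y hy
        simp only [support_cons, List.mem_cons]
        exact Or.inr (hrs y (hs'.mem hy))
      · intro e' he''
        simp only [edges_cons, List.mem_cons]
        exact Or.inr (hre e' (he' e' he''))
    · refine ⟨.cons e h r, ?_, ?_, ?_⟩
      · simpa [IsPath] using ⟨hu, hr⟩
      · intro y hy
        simp only [support_cons, List.mem_cons] at hy ⊢
        rcases hy with rfl | hy
        · exact Or.inl rfl
        · exact Or.inr (hrs y hy)
      · intro e' he'
        simp only [edges_cons, List.mem_cons] at he' ⊢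
        rcases he' with rfl | he'
        · exact Or.inl rfl
        · exact Or.inr (hre e' he')

end Walk
end Multigraph
namespace Multigraph
namespace Walk
variable {G : Multigraph}

lemma support_structure {u v : G.V} (p : G.Walk u v) :
    p.support = [v] ∨ p.support = u :: (p.internals ++ [v]) := by
  cases p with
  | nil => exact Or.inl rfl
  | cons e h p =>
    refine Or.inr ?_
    obtain ⟨l, hl⟩ := exists_support_concat p
    simp only [internals, support_cons, List.tail_cons, hl, List.dropLast_concat]

lemma internals_subset_support {u v : G.V} (p : G.Walk u v) :
    ∀ y ∈ p.internals, y ∈ p.support := by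
  intro y hy
  rcases support_structure p with hs | hs <;> rw [hs]
  · have : p.internals = [] := by
      have : p.support.tail = [] := by rw [hs]; rfl
      simp [internals, this]
    simp [this] at hy
  · simp only [List.mem_cons, List.mem_append]
    tauto

lemma mem_support_cases {u v : G.V} (p : G.Walk u v) :
    ∀ y ∈ p.support, y = u ∨ y = v ∨ y ∈ p.internals := by
  intro y hy
  rcases support_structure p with hs | hs <;> rw [hs] at hy
  · simp only [List.mem_singleton] at hy; exact Or.inr (Or.inl hy)
  · simp only [List.mem_cons, List.mem_append, List.mem_singleton] at hy
    tauto

lemma IsPath.start_not_mem_internals {u v : G.V} {p : G.Walk u v} (hp : p.IsPath) :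
    u ∉ p.internals := by
  intro hu
  have hs := internals_subset_support p
  rcases support_structure p with h | h
  · have : p.internals = [] := by
      simp [internals, h, show p.support.tail = [] by rw [h]; rfl]
    simp [this] at hu
  · rw [IsPath, h] at hp
    have := List.Nodup.notMem (a := u) hp
    simp only [List.mem_append, List.mem_singleton] at this
    exact this (Or.inl hu)

lemma IsPath.end_not_mem_internals {u v : G.V} {p : G.Walk u v} (hp : p.IsPath) :
    v ∉ p.internals := by
  intro hv
  rcases support_structure p with h | h
  · have : p.internals = [] := by
      simp [internals, h, show p.support.tail = [] by rw [h]; rfl]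
    simp [this] at hv
  · rw [IsPath, h] at hp
    have h2 := hp.of_cons
    rw [List.nodup_append] at h2
    exact h2.2.2 v hv v (by simp) rfl

/-- a vertex of a path which is in the support but is not an endpoint is internal;
contrapositive form: a non-internal support vertex is an endpoint. -/
lemma mem_internals_of_mem_support {u v : G.V} (p : G.Walk u v) {y : G.V}
    (hy : y ∈ p.support) (hu : y ≠ u) (hv : y ≠ v) : y ∈ p.internals := by
  rcases mem_support_cases p y hy with h | h | h
  · exact absurd h hu
  · exact absurd h hv
  · exact h

lemma support_subset_of_edges_subset (VJ : Set G.V) (EJ : Set G.E)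
    (hJsub : ∀ e ∈ EJ, ∀ w ∈ G.ends e, w ∈ VJ) :
    ∀ {u v : G.V} (p : G.Walk u v), u ∈ VJ → (∀ e ∈ p.edges, e ∈ EJ) →
      ∀ y ∈ p.support, y ∈ VJ := by
  intro u v p
  induction p with
  | nil v =>
    intro hu _ y hy
    simp only [support_nil, List.mem_singleton] at hy
    exact hy ▸ hu
  | cons e h p ih =>
    rename_i u' v' w'
    intro hu he y hy
    have he' : e ∈ EJ := he e (by simp)
    have hv' : v' ∈ VJ := hJsub e he' v' (by rw [h]; exact Sym2.mem_mk_right _ _)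
    simp only [support_cons, List.mem_cons] at hy
    rcases hy with rfl | hy
    · exact hu
    · exact ih hv' (fun e' he'' => he e' (by simp [he''])) y hy

end Walk
end Multigraph
namespace Multigraph
namespace Walk
variable {G : Multigraph}

lemma support_eq_single {u v : G.V} (p : G.Walk u v) (hp : p.IsPath)
    (x : G.V) (hu : u = x) (hv : v = x) : p.support = [x] := by
  rcases support_structure p with h | h
  · rw [h, hv]
  · exfalso
    rw [IsPath, h, List.nodup_cons] at hp
    exact hp.1 (List.mem_append.mpr (Or.inr (List.mem_singleton.mpr (hu.trans hv.symm))))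

lemma split_start {x u v : G.V} (p : G.Walk u v) (hp : p.IsPath) (hu : u = x) (hv : v ≠ x) :
    ∃ (z : G.V) (e : G.E) (W : G.Walk z v), G.ends e = s(x, z) ∧ x ∉ W.support ∧
      e ∈ p.edges ∧ (∀ e' ∈ W.edges, e' ∈ p.edges) ∧ (∀ w ∈ W.support, w ∈ p.support) := by
  cases p with
  | nil => exact absurd hu hv
  | cons e h rest =>
    rename_i z₁
    subst hu
    refine ⟨z₁, e, rest, h, ?_, by simp, fun e' he' => by simp [he'],
      fun w hw => by simp [hw]⟩
    rw [IsPath, support_cons, List.nodup_cons] at hp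
    exact hp.1

lemma split_end {x : G.V} : ∀ {u v : G.V} (p : G.Walk u v), p.IsPath → u ≠ x → v = x →
    ∃ (z : G.V) (e : G.E) (W : G.Walk u z), G.ends e = s(z, x) ∧ x ∉ W.support ∧
      e ∈ p.edges ∧ (∀ e' ∈ W.edges, e' ∈ p.edges) ∧ (∀ w ∈ W.support, w ∈ p.support) := by
  intro u v p
  induction p with
  | nil =>
    intro _ hu hv
    exact absurd hv hu
  | cons e h rest ih =>
    rename_i u₁ z₁ v₁
    intro hp hu hv
    by_cases hz : z₁ = x
    · -- the rest must be trivial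
      have hsupp : rest.support = [x] := by
        apply support_eq_single rest ?_ x hz hv
        rw [IsPath, support_cons, List.nodup_cons] at hp
        exact hp.2
      cases rest with
      | nil =>
        refine ⟨u₁, e, .nil u₁, by rw [h, hz], by simpa using (Ne.symm hu), by simp,
          by simp, ?_⟩
        intro w hw
        simp only [support_nil, List.mem_singleton] at hw
        simp [hw]
      | cons e2 h2 rest2 =>
        exfalso
        simp only [support_cons] at hsupp
        have : rest2.support = [] := by
          injection hsupp with h1 h2
        exact support_ne_nil rest2 this
    · have hp' : rest.IsPath := by
        rw [IsPath, support_cons, List.nodup_cons] at hp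
        exact hp.2
      obtain ⟨z, e2, W, h1, h2, h3, h4, h5⟩ := ih hp' hz hv
      refine ⟨z, e2, .cons e h W, h1, ?_, by simp [h3], ?_, ?_⟩
      · simp only [support_cons, List.mem_cons, not_or]
        exact ⟨fun hc => hu hc.symm, h2⟩
      · intro e' he'
        simp only [edges_cons, List.mem_cons] at he' ⊢
        rcases he' with rfl | he'
        · exact Or.inl rfl
        · exact Or.inr (h4 e' he')
      · intro w hw
        simp only [support_cons, List.mem_cons] at hw ⊢
        rcases hw with rfl | hw
        · exact Or.inl rfl
        · exact Or.inr (h5 w hw)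

lemma split_mid {x : G.V} : ∀ {u v : G.V} (p : G.Walk u v), p.IsPath → u ≠ x → v ≠ x →
    x ∈ p.support →
    ∃ (y z : G.V) (e1 e2 : G.E) (W1 : G.Walk u y) (W2 : G.Walk z v),
      G.ends e1 = s(y, x) ∧ G.ends e2 = s(x, z) ∧ x ∉ W1.support ∧ x ∉ W2.support ∧
      e1 ∈ p.edges ∧ e2 ∈ p.edges ∧
      (∀ e' ∈ W1.edges, e' ∈ p.edges) ∧ (∀ e' ∈ W2.edges, e' ∈ p.edges) ∧
      (∀ w ∈ W1.support, w ∈ p.support) ∧ (∀ w ∈ W2.support, w ∈ p.support) := by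
  intro u v p
  induction p with
  | nil =>
    intro _ _ hv hx
    simp only [support_nil, List.mem_singleton] at hx
    exact absurd hx.symm hv
  | cons e h rest ih =>
    rename_i u₁ z₁ v₁
    intro hp hu hv hx
    have hp' : rest.IsPath := by
      rw [IsPath, support_cons, List.nodup_cons] at hp
      exact hp.2
    by_cases hz : z₁ = x
    · -- e is the entering edge
      subst hz
      obtain ⟨z, e2, W2, h1, h2, h3, h4, h5⟩ := split_start rest hp' rfl hv
      refine ⟨u₁, z, e, e2, .nil u₁, W2, by rw [h], h1, by simpa using (Ne.symm hu), h2,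
        by simp, by simp [h3], ?_, fun e' he' => by simp [h4 e' he'], ?_, ?_⟩
      · intro e' he'
        simp only [edges_nil, List.not_mem_nil] at he'
      · intro w hw
        simp only [support_nil, List.mem_singleton] at hw
        simp [hw]
      · intro w hw
        simp only [support_cons, List.mem_cons]
        exact Or.inr (h5 w hw)
    · have hx' : x ∈ rest.support := by
        simp only [support_cons, List.mem_cons] at hx
        rcases hx with hcon | hx
        · exact absurd hcon.symm hu
        · exact hx
      obtain ⟨y, z, e1, e2, W1, W2, h1, h2, h3, h4, h5, h6, h7, h8, h9, h10⟩ :=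
        ih hp' hz hv hx'
      refine ⟨y, z, e1, e2, .cons e h W1, W2, h1, h2, ?_, h4, by simp [h5], by simp [h6],
        ?_, fun e' he' => by simp [h8 e' he'], ?_, fun w hw => by simp [h10 w hw]⟩
      · simp only [support_cons, List.mem_cons, not_or]
        exact ⟨fun hc => hu hc.symm, h3⟩
      · intro e' he'
        simp only [edges_cons, List.mem_cons] at he' ⊢
        rcases he' with rfl | he'
        · exact Or.inl rfl
        · exact Or.inr (h7 e' he')
      · intro w hw
        simp only [support_cons, List.mem_cons] at hw ⊢
        rcases hw with rfl | hw
        · exact Or.inl rfl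
        · exact Or.inr (h9 w hw)

end Walk
end Multigraph
namespace Multigraph

variable {G : Multigraph}

/-- Directed walks relative to an allowed-step relation. -/
inductive RWalk (A : G.E → G.V → G.V → Prop) : G.V → G.V → Type
  | nil (v : G.V) : RWalk A v v
  | cons {a b c : G.V} (e : G.E) (h : A e a b) (p : RWalk A b c) : RWalk A a c

namespace RWalk

variable {A : G.E → G.V → G.V → Prop}

def steps : ∀ {u v : G.V}, RWalk A u v → List (G.E × G.V × G.V)
  | _, _, .nil _ => []
  | _, _, .cons (a := a) (b := b) e _ p => (e, a, b) :: p.steps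

def support : ∀ {u v : G.V}, RWalk A u v → List G.V
  | _, v, .nil _ => [v]
  | u, _, .cons _ _ p => u :: p.support

@[simp] lemma steps_nil (v : G.V) : (nil v : RWalk A v v).steps = [] := rfl
@[simp] lemma steps_cons {a b c : G.V} (e : G.E) (h : A e a b) (p : RWalk A b c) :
    (cons e h p).steps = (e, a, b) :: p.steps := rfl
@[simp] lemma support_nil (v : G.V) : (nil v : RWalk A v v).support = [v] := rfl
@[simp] lemma support_cons {a b c : G.V} (e : G.E) (h : A e a b) (p : RWalk A b c) :
    (cons e h p).support = a :: p.support := rfl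

lemma start_mem_support {u v : G.V} (p : RWalk A u v) : u ∈ p.support := by
  cases p <;> simp

lemma steps_spec : ∀ {u v : G.V} (p : RWalk A u v), ∀ s ∈ p.steps,
    A s.1 s.2.1 s.2.2 ∧ s.2.1 ∈ p.support ∧ s.2.2 ∈ p.support := by
  intro u v p
  induction p with
  | nil => simp
  | cons e h p ih =>
    intro s hs
    simp only [steps_cons, List.mem_cons] at hs
    rcases hs with rfl | hs
    · exact ⟨h, by simp, by simp [p.start_mem_support]⟩
    · obtain ⟨h1, h2, h3⟩ := ih s hs
      exact ⟨h1, by simp [h2], by simp [h3]⟩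

/-- distinct support implies distinct edges, provided `A` pins down the ends of edges -/
lemma edges_nodup_of_support_nodup (hA : ∀ e a b, A e a b → G.ends e = s(a, b)) :
    ∀ {u v : G.V} (p : RWalk A u v), p.support.Nodup → (p.steps.map Prod.fst).Nodup := by
  intro u v p
  induction p with
  | nil => simp
  | cons e h p ih =>
    rename_i a b c
    intro hnd
    simp only [support_cons, List.nodup_cons] at hnd
    simp only [steps_cons, List.map_cons, List.nodup_cons]
    refine ⟨?_, ih hnd.2⟩
    intro hmem
    simp only [List.mem_map] at hmem
    obtain ⟨s, hs, hse⟩ := hmem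
    obtain ⟨hA1, hs1, hs2⟩ := steps_spec p s hs
    have h1 : G.ends s.1 = s(s.2.1, s.2.2) := hA _ _ _ hA1
    have h2 : G.ends e = s(a, b) := hA _ _ _ h
    rw [hse, h2] at h1
    rw [Sym2.eq_iff] at h1
    rcases h1 with ⟨rfl, rfl⟩ | ⟨rfl, rfl⟩
    · exact hnd.1 hs1
    · exact hnd.1 hs2

def append : ∀ {u v w : G.V}, RWalk A u v → RWalk A v w → RWalk A u w
  | _, _, _, .nil _, q => q
  | _, _, _, .cons e h p, q => .cons e h (p.append q)

lemma exists_suffix : ∀ {u v : G.V} (p : RWalk A u v) (y : G.V), y ∈ p.support →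
    ∃ r : RWalk A y v, r.support.Sublist p.support ∧ ∀ s ∈ r.steps, s ∈ p.steps := by
  intro u v p
  induction p with
  | nil v =>
    intro y hy
    simp only [support_nil, List.mem_singleton] at hy
    subst hy
    exact ⟨.nil _, by simp, by simp⟩
  | cons e h p ih =>
    rename_i a b c
    intro y hy
    rcases eq_or_ne y a with rfl | hne
    · exact ⟨.cons e h p, List.Sublist.refl _, fun _ hs => hs⟩
    · have hy' : y ∈ p.support := by
        simp only [support_cons, List.mem_cons] at hy; tauto
      obtain ⟨r, hs, hst⟩ := ih y hy'
      exact ⟨r, hs.trans (List.sublist_cons_self _ _), fun s hs' => by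
        simp only [steps_cons, List.mem_cons]; exact Or.inr (hst s hs')⟩

lemma exists_nodup {u v : G.V} (p : RWalk A u v) :
    ∃ r : RWalk A u v, r.support.Nodup ∧ ∀ s ∈ r.steps, s ∈ p.steps := by
  induction p with
  | nil v => exact ⟨.nil v, by simp, by simp⟩
  | cons e h p ih =>
    rename_i a b c
    obtain ⟨r, hr, hrs⟩ := ih
    by_cases ha : a ∈ r.support
    · obtain ⟨r', hs', hst'⟩ := exists_suffix r a ha
      refine ⟨r', hs'.nodup hr, fun s hs => ?_⟩
      simp only [steps_cons, List.mem_cons]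
      exact Or.inr (hrs s (hst' s hs))
    · refine ⟨.cons e h r, by simp [ha, hr], fun s hs => ?_⟩
      simp only [steps_cons, List.mem_cons] at hs ⊢
      rcases hs with rfl | hs
      · exact Or.inl rfl
      · exact Or.inr (hrs s hs)

/-- change the allowed-step relation -/
lemma weaken {A' : G.E → G.V → G.V → Prop} :
    ∀ {u v : G.V} (p : RWalk A u v), (∀ s ∈ p.steps, A' s.1 s.2.1 s.2.2) →
    ∃ r : RWalk A' u v, r.steps = p.steps := by
  intro u v p
  induction p with
  | nil v => exact fun _ => ⟨.nil v, rfl⟩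
  | cons e h p ih =>
    intro hall
    obtain ⟨r, hr⟩ := ih (fun s hs => hall s (by simp [hs]))
    exact ⟨.cons e (hall (e, _, _) (by simp)) r, by simp [hr]⟩

end RWalk
end Multigraph
set_option linter.unusedSectionVars false
namespace Multigraph
namespace Flow

variable {G : Multigraph} [DecidableEq G.E] [DecidableEq G.V] [Fintype G.E] [Fintype G.V]

def fval (p : G.E × G.V × G.V) (v : G.V) : ℤ :=
  (if p.2.1 = v then 1 else 0) - (if p.2.2 = v then 1 else 0)

def net (S : Finset (G.E × G.V × G.V)) (v : G.V) : ℤ := ∑ p ∈ S, fval p v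

def OKS (EJ : Set G.E) (S : Finset (G.E × G.V × G.V)) : Prop :=
  ∀ p ∈ S, G.ends p.1 = s(p.2.1, p.2.2) ∧ p.1 ∈ EJ

def Uniq (S : Finset (G.E × G.V × G.V)) : Prop :=
  ∀ p ∈ S, ∀ p' ∈ S, p.1 = p'.1 → p = p'

def cnt : List G.V → G.V → ℤ
  | [], _ => 0
  | w :: m, v => cnt m v + (if w = v then 1 else 0)

lemma cnt_nonneg (m : List G.V) (v : G.V) : 0 ≤ cnt m v := by
  induction m with
  | nil => simp [cnt]
  | cons w m ih => simp only [cnt]; split <;> omega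

lemma sum_cnt (m : List G.V) : ∑ v : G.V, cnt m v = m.length := by
  induction m with
  | nil => simp [cnt]
  | cons w m ih =>
    simp only [cnt, Finset.sum_add_distrib, ih, List.length_cons]
    rw [Finset.sum_ite_eq Finset.univ w (fun _ => (1 : ℤ))]
    simp

def ConsL (b₀ : G.V) (S : Finset (G.E × G.V × G.V)) (m : List G.V) : Prop :=
  ∀ v, v ≠ b₀ → net S v = cnt m v

/-- Flow decomposition into edge-disjoint walks to the sink. -/
theorem decomp (EJ : Set G.E) (b₀ : G.V) :
    ∀ (N : ℕ) (S : Finset (G.E × G.V × G.V)) (m : List G.V),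
    S.card + m.length ≤ N → OKS EJ S → Uniq S → ConsL b₀ S m →
    ∃ W : (i : Fin m.length) → G.Walk (m.get i) b₀,
      (∀ i, ∀ e ∈ (W i).edges, ∃ a b, ((e, a, b) : G.E × G.V × G.V) ∈ S) ∧
      (∀ i j, i ≠ j → ∀ e ∈ (W i).edges, e ∉ (W j).edges) := by
  intro N
  induction N with
  | zero =>
    intro S m hN _ _ _
    have hm : m.length = 0 := by omega
    have : m = [] := List.length_eq_zero_iff.mp hm
    subst this
    exact ⟨fun i => i.elim0, fun i => i.elim0, fun i => i.elim0⟩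
  | succ N ih =>
    intro S m hN hOK hU hC
    cases m with
    | nil => exact ⟨fun i => i.elim0, fun i => i.elim0, fun i => i.elim0⟩
    | cons v m' =>
      by_cases hv : v = b₀
      · -- trivial terminal
        obtain ⟨W', hW'1, hW'2⟩ := ih S m' (by simp at hN ⊢; omega) hOK hU (by
          intro w hw
          have h1 := hC w hw
          have hvw : v ≠ w := fun h => hw (h ▸ hv)
          rw [h1]
          simp [cnt, if_neg hvw])
        refine ⟨fun i => Fin.cases ((Walk.nil b₀).copy hv.symm rfl) (fun j => W' j) i, ?_, ?_⟩
        · intro i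
          refine Fin.cases ?_ ?_ i
          · show ∀ e ∈ ((Walk.nil b₀).copy hv.symm rfl).edges, _
            simp
          · intro j
            show ∀ e ∈ (W' j).edges, _
            simpa using hW'1 j
        · intro i
          refine Fin.cases ?_ ?_ i
          · intro j
            refine Fin.cases ?_ ?_ j
            · intro hij; exact absurd rfl hij
            · intro j' _
              show ∀ e ∈ ((Walk.nil b₀).copy hv.symm rfl).edges, e ∉ (W' j').edges
              simp
          · intro i' j
            refine Fin.cases ?_ ?_ j
            · intro _; show ∀ e ∈ (W' i').edges, e ∉ ((Walk.nil b₀).copy hv.symm rfl).edges; simp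
            · intro j' hij
              have hne : i' ≠ j' := fun hh => hij (by rw [hh])
              show ∀ e ∈ (W' i').edges, e ∉ (W' j').edges
              simpa using hW'2 i' j' hne
      · -- route the head terminal along an edge of the flow
        have hnet : 0 < net S v := by
          have h1 := hC v hv
          rw [h1]
          simp [cnt]
          have := cnt_nonneg m' v
          omega
        have hex : ∃ p ∈ S, p.2.1 = v := by
          by_contra hcon
          push_neg at hcon
          have hle : net S v ≤ 0 := by
            apply Finset.sum_nonpos
            intro p hp
            simp only [fval, if_neg (hcon p hp)]
            split <;> omega
          omega
        obtain ⟨p, hpS, hp1⟩ := hex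
        obtain ⟨e, v₁, b⟩ := p
        simp only at hp1
        rw [hp1] at hpS
        clear hp1
        have hends : G.ends e = s(v, b) := (hOK _ hpS).1
        have hcard : (S.erase (e, v, b)).card = S.card - 1 := Finset.card_erase_of_mem hpS
        have hScard : 0 < S.card := Finset.card_pos.mpr ⟨_, hpS⟩
        have hC' : ConsL b₀ (S.erase (e, v, b)) (b :: m') := by
          intro w hw
          have hnet' : net (S.erase (e, v, b)) w + fval (e, v, b) w = net S w :=
            Finset.sum_erase_add _ _ hpS
          have h1 : net S w = cnt m' w + (if v = w then (1:ℤ) else 0) := by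
            have := hC w hw
            rw [this]; simp [cnt]
          have h2 : fval (e, v, b) w
              = (if v = w then (1:ℤ) else 0) - (if b = w then (1:ℤ) else 0) := rfl
          have h3 : cnt (b :: m') w = cnt m' w + (if b = w then (1:ℤ) else 0) := rfl
          rw [h3]
          rw [h2, h1] at hnet'
          linarith
        obtain ⟨W', hW'1, hW'2⟩ := ih (S.erase (e, v, b)) (b :: m') (by
          rw [hcard]
          simp only [List.length_cons] at hN ⊢
          omega) (fun p hp => hOK p (Finset.mem_of_mem_erase hp)) (fun p hp p' hp' =>
            hU p (Finset.mem_of_mem_erase hp) p' (Finset.mem_of_mem_erase hp'))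
          hC'
        have hefresh : ∀ a' b', ((e, a', b') : G.E × G.V × G.V) ∉ S.erase (e, v, b) := by
          intro a' b' hmem
          have h1 : ((e, a', b') : G.E × G.V × G.V) ∈ S := Finset.mem_of_mem_erase hmem
          have h2 := hU _ h1 _ hpS rfl
          rw [h2] at hmem
          exact (Finset.notMem_erase _ _) hmem
        have hkey : ∀ (j : Fin (b :: m').length), e ∉ (W' j).edges := by
          intro j he'
          obtain ⟨a', b', h'⟩ := hW'1 j e he'
          exact hefresh a' b' h'
        refine ⟨fun i => Fin.cases (Walk.cons e hends (W' ⟨0, Nat.succ_pos _⟩))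
          (fun j => W' j.succ) i, ?_, ?_⟩
        · intro i
          refine Fin.cases ?_ ?_ i
          · intro e' he'
            change e' ∈ (Walk.cons e hends (W' ⟨0, Nat.succ_pos _⟩)).edges at he'
            simp only [Fin.cases_zero, Walk.edges_cons, List.mem_cons] at he'
            rcases he' with rfl | he'
            · exact ⟨v, b, hpS⟩
            · obtain ⟨a', b', h'⟩ := hW'1 _ e' he'
              exact ⟨a', b', Finset.mem_of_mem_erase h'⟩
          · intro j
            simp only [Fin.cases_succ]
            intro e' he'
            obtain ⟨a', b', h'⟩ := hW'1 j.succ e' he'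
            exact ⟨a', b', Finset.mem_of_mem_erase h'⟩
        · intro i
          refine Fin.cases ?_ ?_ i
          · intro j
            refine Fin.cases ?_ ?_ j
            · intro hij; exact absurd rfl hij
            · intro j' _
              show ∀ e' ∈ (Walk.cons e hends (W' ⟨0, Nat.succ_pos _⟩)).edges, _
              simp only [Fin.cases_zero, Fin.cases_succ, Walk.edges_cons, List.mem_cons]
              rintro e' (rfl | he') he''
              · exact hkey _ he''
              · exact hW'2 ⟨0, Nat.succ_pos _⟩ j'.succ
                  (by simp [Fin.ext_iff]) e' he' he''
          · intro i' j
            refine Fin.cases ?_ ?_ j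
            · intro _
              show ∀ e' ∈ _, e' ∉ (Walk.cons e hends (W' ⟨0, Nat.succ_pos _⟩)).edges
              simp only [Fin.cases_zero, Fin.cases_succ, Walk.edges_cons, List.mem_cons]
              intro e' he' hmem
              rcases hmem with rfl | he''
              · exact hkey _ he'
              · exact hW'2 i'.succ ⟨0, Nat.succ_pos _⟩
                  (by simp [Fin.ext_iff]) e' he' he''
            · intro j' hij
              simp only [Fin.cases_succ]
              have hne : i'.succ ≠ j'.succ := by
                intro hh
                exact hij (by rw [Fin.succ_inj] at hh; rw [hh])
              exact hW'2 i'.succ j'.succ hne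

end Flow
end Multigraph
namespace Multigraph
namespace Flow

variable {G : Multigraph} [DecidableEq G.E] [DecidableEq G.V] [Fintype G.E] [Fintype G.V]

def Res (EJ : Set G.E) (S : Finset (G.E × G.V × G.V)) (e : G.E) (a c : G.V) : Prop :=
  G.ends e = s(a, c) ∧ e ∈ EJ ∧
    ((∀ y z, ((e, y, z) : G.E × G.V × G.V) ∉ S) ∨ ((e, c, a) : G.E × G.V × G.V) ∈ S)

lemma res_ends (EJ : Set G.E) (S : Finset (G.E × G.V × G.V)) :
    ∀ e a c, Res EJ S e a c → G.ends e = s(a, c) := fun _ _ _ h => h.1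

/-- Toggling the flow along a residual trail. -/
lemma toggle (EJ : Set G.E) (b₀ : G.V) :
    ∀ (n : ℕ) (S : Finset (G.E × G.V × G.V)), OKS EJ S → Uniq S →
    ∀ (τ : G.V) (W : RWalk (Res EJ S) τ b₀), W.steps.length ≤ n →
    (W.steps.map Prod.fst).Nodup →
    ∃ S', OKS EJ S' ∧ Uniq S' ∧ ∀ v, net S' v =
      net S v + (if τ = v then 1 else 0) - (if b₀ = v then 1 else 0) := by
  intro n
  induction n with
  | zero =>
    intro S hOK hU τ W hlen _
    cases W with
    | nil =>
      exact ⟨S, hOK, hU, fun v => by ring⟩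
    | cons e h p => simp [RWalk.steps] at hlen
  | succ n ih =>
    intro S hOK hU τ W hlen hnd
    cases W with
    | nil =>
      exact ⟨S, hOK, hU, fun v => by ring⟩
    | cons e h W' =>
      rename_i b
      simp only [RWalk.steps_cons, List.map_cons, List.nodup_cons, List.length_cons] at hlen hnd
      obtain ⟨he, hnd'⟩ := hnd
      -- toggle the first step
      obtain ⟨hends, hEJ, hres⟩ := h
      by_cases hrev : ((e, b, τ) : G.E × G.V × G.V) ∈ S
      · -- remove the reversed oriented edge
        set S₁ := S.erase (e, b, τ) with hS₁
        have hOK₁ : OKS EJ S₁ := fun p hp => hOK p (Finset.mem_of_mem_erase hp)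
        have hU₁ : Uniq S₁ := fun p hp p' hp' =>
          hU p (Finset.mem_of_mem_erase hp) p' (Finset.mem_of_mem_erase hp')
        have hnet₁ : ∀ v, net S₁ v = net S v
            - ((if b = v then (1:ℤ) else 0) - (if τ = v then 1 else 0)) := by
          intro v
          have h2 : net S₁ v + fval (e, b, τ) v = net S v := Finset.sum_erase_add _ _ hrev
          simp only [fval] at h2
          linarith
        have hmem₁ : ∀ e' y z, e' ≠ e →
            (((e', y, z) : G.E × G.V × G.V) ∈ S₁ ↔ ((e', y, z) : G.E × G.V × G.V) ∈ S) := by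
          intro e' y z hne
          rw [hS₁, Finset.mem_erase]
          refine ⟨fun h => h.2, fun h => ⟨?_, h⟩⟩
          intro hcon
          exact hne (congrArg Prod.fst hcon)
        obtain ⟨W'', hW''⟩ := W'.weaken (A' := Res EJ S₁) (by
          intro s hs
          obtain ⟨h1, h2, h3⟩ := (RWalk.steps_spec W' s hs).1
          have hse : s.1 ≠ e := by
            intro hcon
            exact he (hcon ▸ List.mem_map_of_mem (f := Prod.fst) hs)
          refine ⟨h1, h2, ?_⟩
          rcases h3 with h3 | h3
          · exact Or.inl (fun y z => fun hc => h3 y z ((hmem₁ s.1 y z hse).mp hc))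
          · exact Or.inr ((hmem₁ s.1 _ _ hse).mpr h3))
        obtain ⟨S', hOK', hU', hnet'⟩ := ih S₁ hOK₁ hU₁ b W''
          (by rw [hW'']; omega) (by rw [hW'']; exact hnd')
        refine ⟨S', hOK', hU', fun v => ?_⟩
        rw [hnet' v, hnet₁ v]
        ring
      · -- insert the oriented edge
        have hfresh : ∀ y z, ((e, y, z) : G.E × G.V × G.V) ∉ S := by
          rcases hres with h3 | h3
          · exact h3
          · exact absurd h3 hrev
        set S₁ := insert ((e, τ, b) : G.E × G.V × G.V) S with hS₁
        have hnotmem : ((e, τ, b) : G.E × G.V × G.V) ∉ S := hfresh τ b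
        have hOK₁ : OKS EJ S₁ := by
          intro p hp
          rw [hS₁, Finset.mem_insert] at hp
          rcases hp with rfl | hp
          · exact ⟨hends, hEJ⟩
          · exact hOK p hp
        have hU₁ : Uniq S₁ := by
          intro p hp p' hp' hee
          rw [hS₁, Finset.mem_insert] at hp hp'
          rcases hp with rfl | hp <;> rcases hp' with rfl | hp'
          · rfl
          · exfalso
            obtain ⟨e2, y, z⟩ := p'
            have h4 : e2 = e := by simpa using hee.symm
            subst h4
            exact hfresh y z hp'
          · exfalso
            obtain ⟨e2, y, z⟩ := p
            have h4 : e2 = e := by simpa using hee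
            subst h4
            exact hfresh y z hp
          · exact hU p hp p' hp' hee
        have hnet₁ : ∀ v, net S₁ v = net S v
            + ((if τ = v then (1:ℤ) else 0) - (if b = v then 1 else 0)) := by
          intro v
          rw [hS₁, net, Finset.sum_insert hnotmem]
          simp only [fval, net]
          ring
        have hmem₁ : ∀ e' y z, e' ≠ e →
            (((e', y, z) : G.E × G.V × G.V) ∈ S₁ ↔ ((e', y, z) : G.E × G.V × G.V) ∈ S) := by
          intro e' y z hne
          rw [hS₁, Finset.mem_insert]
          refine ⟨fun h => ?_, fun h => Or.inr h⟩
          rcases h with h | h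
          · exact absurd (congrArg Prod.fst h) hne
          · exact h
        obtain ⟨W'', hW''⟩ := W'.weaken (A' := Res EJ S₁) (by
          intro s hs
          obtain ⟨⟨h1, h2, h3⟩, _, _⟩ := RWalk.steps_spec W' s hs
          have hse : s.1 ≠ e := by
            intro hcon
            exact he (hcon ▸ List.mem_map_of_mem (f := Prod.fst) hs)
          refine ⟨h1, h2, ?_⟩
          rcases h3 with h3 | h3
          · exact Or.inl (fun y z hc => h3 y z ((hmem₁ s.1 y z hse).mp hc))
          · exact Or.inr ((hmem₁ s.1 _ _ hse).mpr h3))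
        obtain ⟨S', hOK', hU', hnet'⟩ := ih S₁ hOK₁ hU₁ b W''
          (by rw [hW'']; omega) (by rw [hW'']; exact hnd')
        refine ⟨S', hOK', hU', fun v => ?_⟩
        rw [hnet' v, hnet₁ v]
        ring

end Flow
end Multigraph
namespace Multigraph
namespace Flow

variable {G : Multigraph} [DecidableEq G.E] [DecidableEq G.V] [Fintype G.E] [Fintype G.V]

lemma reach_step {EJ : Set G.E} {S : Finset (G.E × G.V × G.V)} {τ a c : G.V} {e : G.E}
    (ha : Nonempty (RWalk (Res EJ S) τ a)) (h : Res EJ S e a c) :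
    Nonempty (RWalk (Res EJ S) τ c) := by
  obtain ⟨W⟩ := ha
  exact ⟨W.append (.cons e h (.nil c))⟩

lemma reach_sink (EJ : Set G.E) (VJ : Set G.V) (b₀ : G.V) (K : ℕ)
    (hconn : ∀ F : Set G.E, F.ncard < K →
      ∀ u ∈ VJ, ∀ w ∈ VJ, ∃ p : G.Walk u w, ∀ e ∈ p.edges, e ∈ EJ \ F)
    (S : Finset (G.E × G.V × G.V)) (hOK : OKS EJ S) (hU : Uniq S)
    (m : List G.V) (hC : ConsL b₀ S m) (hlen : m.length < K)
    (τ : G.V) (hτ : τ ∈ VJ) (hb₀ : b₀ ∈ VJ) :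
    Nonempty (RWalk (Res EJ S) τ b₀) := by
  classical
  by_contra hR
  set R : Set G.V := {v | Nonempty (RWalk (Res EJ S) τ v)} with hRdef
  have hτR : τ ∈ R := ⟨.nil τ⟩
  have hb₀R : b₀ ∉ R := hR
  -- all `EJ`-edges crossing out of `R` carry outward-oriented flow
  have hstep1 : ∀ (e : G.E) (a c : G.V), e ∈ EJ → G.ends e = s(a, c) → a ∈ R → c ∉ R →
      ((e, a, c) : G.E × G.V × G.V) ∈ S := by
    intro e a c hEJ hends haR hcR
    by_cases hco : ∀ y z, ((e, y, z) : G.E × G.V × G.V) ∉ S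
    · exact absurd (reach_step haR ⟨hends, hEJ, Or.inl hco⟩) hcR
    · push_neg at hco
      obtain ⟨y, z, hyz⟩ := hco
      have h1 : G.ends e = s(y, z) := (hOK _ hyz).1
      rw [hends] at h1
      rw [Sym2.eq_iff] at h1
      rcases h1 with ⟨rfl, rfl⟩ | ⟨rfl, rfl⟩
      · exact hyz
      · exact absurd (reach_step haR ⟨hends, hEJ, Or.inr hyz⟩) hcR
  -- no flow enters `R`
  have hstep2 : ∀ p ∈ S, p.2.2 ∈ R → p.2.1 ∈ R := by
    intro p hp h2
    have h1 : G.ends p.1 = s(p.2.2, p.2.1) := by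
      rw [(hOK _ hp).1, Sym2.eq_swap]
    refine (reach_step h2 ⟨h1, (hOK _ hp).2, Or.inr ?_⟩ : Nonempty _)
    exact hp
  set Ffin : Finset G.E := Finset.univ.filter
    (fun e => e ∈ EJ ∧ ∃ a c, G.ends e = s(a, c) ∧ a ∈ R ∧ c ∉ R) with hFdef
  -- the cut has at least K edges
  have hbig : K ≤ Ffin.card := by
    by_contra hsmall
    push_neg at hsmall
    have hncard : (↑Ffin : Set G.E).ncard < K := by
      rw [Set.ncard_coe_finset]; exact hsmall
    obtain ⟨p, hp⟩ := hconn ↑Ffin hncard τ hτ b₀ hb₀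
    have hwalk : ∀ {u w : G.V} (p : G.Walk u w), u ∈ R →
        (∀ e ∈ p.edges, e ∈ EJ \ (↑Ffin : Set G.E)) → w ∈ R := by
      intro u w p
      induction p with
      | nil => exact fun hu _ => hu
      | cons e h p ih =>
        rename_i u' v' w'
        intro hu he
        have heEJ : e ∈ EJ \ (↑Ffin : Set G.E) := he e (by simp)
        have hv' : v' ∈ R := by
          by_contra hv'
          refine heEJ.2 ?_
          simp only [hFdef, Finset.coe_filter, Finset.mem_univ, true_and, Set.mem_setOf_eq]
          exact ⟨heEJ.1, u', v', h, hu, hv'⟩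
        exact ih hv' (fun e' he' => he e' (by simp [he']))
    exact hb₀R (hwalk p hτR hp)
  -- counting
  set RF : Finset G.V := Finset.univ.filter (· ∈ R) with hRF
  set Scross : Finset (G.E × G.V × G.V) := S.filter (fun p => p.2.1 ∈ R ∧ p.2.2 ∉ R)
    with hScross
  have hsurj : Ffin.card ≤ Scross.card := by
    apply Finset.card_le_card_of_surjOn Prod.fst
    intro e heF
    simp only [hFdef, Finset.coe_filter, Finset.mem_univ, true_and, Set.mem_setOf_eq] at heF
    obtain ⟨hEJ, a, c, hends, haR, hcR⟩ := heF
    refine ⟨(e, a, c), ?_, rfl⟩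
    simp only [hScross, Finset.coe_filter, Set.mem_setOf_eq]
    exact ⟨hstep1 e a c hEJ hends haR hcR, haR, hcR⟩
  have hsum1 : ∑ v ∈ RF, net S v = Scross.card := by
    rw [hScross]
    unfold net
    rw [Finset.sum_comm]
    have hcard : (((S.filter (fun p => p.2.1 ∈ R ∧ p.2.2 ∉ R)).card : ℕ) : ℤ)
        = ∑ p ∈ S, (if p.2.1 ∈ R ∧ p.2.2 ∉ R then (1:ℤ) else 0) := by
      rw [Finset.card_filter]
      push_cast
      apply Finset.sum_congr rfl
      intro p _
      split <;> simp
    rw [hcard]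
    apply Finset.sum_congr rfl
    intro p hp
    have hinner : ∑ v ∈ RF, fval p v
        = (if p.2.1 ∈ RF then (1:ℤ) else 0) - (if p.2.2 ∈ RF then (1:ℤ) else 0) := by
      unfold fval
      rw [Finset.sum_sub_distrib]
      rw [Finset.sum_ite_eq RF p.2.1 (fun _ => (1:ℤ)), Finset.sum_ite_eq RF p.2.2
        (fun _ => (1:ℤ))]
    rw [hinner]
    have hmemRF : ∀ w, w ∈ RF ↔ w ∈ R := by
      intro w; simp [hRF]
    by_cases h1 : p.2.1 ∈ R <;> by_cases h2 : p.2.2 ∈ R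
    · simp [hmemRF, h1, h2]
    · simp [hmemRF, h1, h2]
    · exact absurd (hstep2 p hp h2) h1
    · simp [hmemRF, h1, h2]
  have hsum2 : ∑ v ∈ RF, net S v = ∑ v ∈ RF, cnt m v := by
    apply Finset.sum_congr rfl
    intro v hv
    have hvb : v ≠ b₀ := by
      intro hcon
      rw [hRF] at hv
      simp only [Finset.mem_filter] at hv
      exact hb₀R (hcon ▸ hv.2)
    exact hC v hvb
  have hsum3 : ∑ v ∈ RF, cnt m v ≤ (m.length : ℤ) := by
    rw [← sum_cnt m]
    apply Finset.sum_le_sum_of_subset_of_nonneg (Finset.subset_univ RF)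
    intro v _ _
    exact cnt_nonneg m v
  have : (K : ℤ) ≤ (m.length : ℤ) := by
    calc (K : ℤ) ≤ (Ffin.card : ℤ) := by exact_mod_cast hbig
    _ ≤ (Scross.card : ℤ) := by exact_mod_cast hsurj
    _ = ∑ v ∈ RF, net S v := hsum1.symm
    _ = ∑ v ∈ RF, cnt m v := hsum2
    _ ≤ (m.length : ℤ) := hsum3
  omega

lemma augment (EJ : Set G.E) (VJ : Set G.V) (b₀ : G.V) (K : ℕ)
    (hconn : ∀ F : Set G.E, F.ncard < K →
      ∀ u ∈ VJ, ∀ w ∈ VJ, ∃ p : G.Walk u w, ∀ e ∈ p.edges, e ∈ EJ \ F)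
    (S : Finset (G.E × G.V × G.V)) (hOK : OKS EJ S) (hU : Uniq S)
    (m : List G.V) (hC : ConsL b₀ S m) (hlen : m.length < K)
    (τ : G.V) (hτ : τ ∈ VJ) (hb₀ : b₀ ∈ VJ) :
    ∃ S', OKS EJ S' ∧ Uniq S' ∧ ConsL b₀ S' (τ :: m) := by
  obtain ⟨W₀⟩ := reach_sink EJ VJ b₀ K hconn S hOK hU m hC hlen τ hτ hb₀
  obtain ⟨W, hWnd, _⟩ := W₀.exists_nodup
  have hend : (W.steps.map Prod.fst).Nodup :=
    RWalk.edges_nodup_of_support_nodup (res_ends EJ S) W hWnd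
  obtain ⟨S', hOK', hU', hnet'⟩ := toggle EJ b₀ W.steps.length S hOK hU τ W le_rfl hend
  refine ⟨S', hOK', hU', ?_⟩
  intro v hv
  rw [hnet' v, hC v hv]
  simp only [cnt, if_neg (fun hcon : b₀ = v => hv hcon.symm)]
  ring

lemma buildflow (EJ : Set G.E) (VJ : Set G.V) (b₀ : G.V) (K : ℕ)
    (hconn : ∀ F : Set G.E, F.ncard < K →
      ∀ u ∈ VJ, ∀ w ∈ VJ, ∃ p : G.Walk u w, ∀ e ∈ p.edges, e ∈ EJ \ F)
    (hb₀ : b₀ ∈ VJ) :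
    ∀ (m : List G.V), m.length ≤ K → (∀ v ∈ m, v ∈ VJ) →
    ∃ S, OKS EJ S ∧ Uniq S ∧ ConsL b₀ S m := by
  intro m
  induction m with
  | nil =>
    intro _ _
    refine ⟨∅, fun p hp => absurd hp (Finset.notMem_empty p), fun p hp => absurd hp
      (Finset.notMem_empty p), fun v _ => ?_⟩
    simp [net, cnt]
  | cons τ m' ih =>
    intro hlen hmem
    obtain ⟨S, hOK, hU, hC⟩ := ih (by simp at hlen; omega)
      (fun v hv => hmem v (by simp [hv]))
    exact augment EJ VJ b₀ K hconn S hOK hU m' hC (by simp at hlen; omega) τ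
      (hmem τ (by simp)) hb₀

/-- The spider lemma: edge-disjoint walks from at most `K` terminals to a common sink. -/
theorem spider (EJ : Set G.E) (VJ : Set G.V) (b₀ : G.V) (K : ℕ)
    (hconn : ∀ F : Set G.E, F.ncard < K →
      ∀ u ∈ VJ, ∀ w ∈ VJ, ∃ p : G.Walk u w, ∀ e ∈ p.edges, e ∈ EJ \ F)
    (hb₀ : b₀ ∈ VJ) (n : ℕ) (hn : n ≤ K) (t : Fin n → G.V) (ht : ∀ i, t i ∈ VJ) :
    ∃ Q : (i : Fin n) → G.Walk (t i) b₀,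
      (∀ i, ∀ e ∈ (Q i).edges, e ∈ EJ) ∧
      (∀ i j, i ≠ j → ∀ e ∈ (Q i).edges, e ∉ (Q j).edges) := by
  obtain ⟨S, hOK, hU, hC⟩ := buildflow EJ VJ b₀ K hconn hb₀ (List.ofFn t)
    (by simp [hn]) (by
      intro v hv
      rw [List.mem_ofFn] at hv
      obtain ⟨i, rfl⟩ := hv
      exact ht i)
  obtain ⟨W, hW1, hW2⟩ := decomp EJ b₀ (S.card + (List.ofFn t).length) S (List.ofFn t)
    le_rfl hOK hU hC
  have hlen : n = (List.ofFn t).length := (List.length_ofFn (f := t)).symm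
  have hget : ∀ i : Fin n, (List.ofFn t).get (Fin.cast hlen i) = t i := by
    intro i
    simp [List.get_ofFn]
  refine ⟨fun i => (W (Fin.cast hlen i)).copy (hget i) rfl, ?_, ?_⟩
  · intro i e he
    rw [Walk.edges_copy] at he
    obtain ⟨a, b, hm⟩ := hW1 _ e he
    exact (hOK _ hm).2
  · intro i j hij e he1 he2
    rw [Walk.edges_copy] at he1 he2
    refine hW2 (Fin.cast hlen i) (Fin.cast hlen j) ?_ e he1 he2
    intro hcon
    exact hij (by
      have := congrArg (Fin.cast hlen.symm) hcon
      simpa using this)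

/-- The spider lemma, free of finiteness instance arguments. -/
theorem spider' {G₀ : Multigraph} (EJ : Set G₀.E) (VJ : Set G₀.V) (b₀ : G₀.V) (K : ℕ)
    (hconn : ∀ F : Set G₀.E, F.ncard < K →
      ∀ u ∈ VJ, ∀ w ∈ VJ, ∃ p : G₀.Walk u w, ∀ e ∈ p.edges, e ∈ EJ \ F)
    (hb₀ : b₀ ∈ VJ) (n : ℕ) (hn : n ≤ K) (t : Fin n → G₀.V) (ht : ∀ i, t i ∈ VJ) :
    ∃ Q : (i : Fin n) → G₀.Walk (t i) b₀,
      (∀ i, ∀ e ∈ (Q i).edges, e ∈ EJ) ∧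
      (∀ i j, i ≠ j → ∀ e ∈ (Q i).edges, e ∉ (Q j).edges) := by
  classical
  haveI : Fintype G₀.V := Fintype.ofFinite _
  haveI : Fintype G₀.E := Fintype.ofFinite _
  exact spider EJ VJ b₀ K hconn hb₀ n hn t ht

end Flow
end Multigraph

open Multigraph in
/-- contracting a `2|E(H)|`-edge-connected subgraph preserves containing `H`
as a strong immersion. -/
theorem contract_strongImmersion (G H : Multigraph) (VJ : Set G.V) (EJ : Set G.E)
    (hJsub : ∀ e ∈ EJ, ∀ w ∈ G.ends e, w ∈ VJ) (hne : VJ.Nonempty)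
    (hJconn : ∀ F : Set G.E, F.ncard < 2 * Nat.card H.E →
      ∀ u ∈ VJ, ∀ w ∈ VJ, ∃ p : G.Walk u w, ∀ e ∈ p.edges, e ∈ EJ \ F)
    (G' : Multigraph) (q : G.V → G'.V) (x : G'.V)
    (hcons : IsConsolidation G VJ G' q x)
    (h : StrongImmersion H G') : StrongImmersion H G := by
  classical
  obtain ⟨I', hstrong⟩ := h
  obtain ⟨hsurj, hq2, hq3, hq4, φ, hφ⟩ := hcons
  obtain ⟨b₀, hb₀⟩ := hne
  -- the vertex lift
  set L : G'.V → G.V := fun y => if h : y = x then b₀ else (hsurj y).choose with hLdef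
  have hqb₀ : q b₀ = x := hq2 b₀ hb₀
  have hLx : L x = b₀ := by simp [hLdef]
  have hqL : ∀ y, q (L y) = y := by
    intro y
    by_cases hy : y = x
    · rw [hy, hLx, hqb₀]
    · simp only [hLdef, dif_neg hy]
      exact (hsurj y).choose_spec
  have hLnot : ∀ y, y ≠ x → L y ∉ VJ := by
    intro y hy hmem
    exact hy (by rw [← hqL y, hq2 _ hmem])
  have hLinj : Function.Injective L := fun a b hab => by rw [← hqL a, ← hqL b, hab]
  -- the edge lift
  set ψ : G'.E → G.E := fun e' => (φ.symm e').1 with hψdef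
  have hψends : ∀ e', Sym2.map q (G.ends (ψ e')) = G'.ends e' := by
    intro e'
    have := hφ (φ.symm e')
    rw [Equiv.apply_symm_apply] at this
    exact this.symm
  have hψinj : Function.Injective ψ := by
    intro a b hab
    have h1 : φ.symm a = φ.symm b := Subtype.ext hab
    calc a = φ (φ.symm a) := (Equiv.apply_symm_apply φ a).symm
    _ = φ (φ.symm b) := by rw [h1]
    _ = b := Equiv.apply_symm_apply φ b
  have hψVJ : ∀ e', ψ e' ∉ EJ := by
    intro e' hmem
    obtain ⟨w, hw1, hw2⟩ := (φ.symm e').2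
    exact hw2 (hJsub _ hmem w hw1)
  -- lifting an edge avoiding `x`
  have hedge : ∀ (e' : G'.E) (y z : G'.V), y ≠ x → z ≠ x → G'.ends e' = s(y, z) →
      G.ends (ψ e') = s(L y, L z) := by
    intro e' y z hy hz he
    have h1 := hψends e'
    rw [he] at h1
    obtain ⟨a, b, hab⟩ : ∃ a b, G.ends (ψ e') = s(a, b) :=
      Sym2.ind (fun a b => ⟨a, b, rfl⟩) (G.ends (ψ e'))
    rw [hab] at h1 ⊢
    rw [Sym2.map_pair_eq, Sym2.eq_iff] at h1
    have haL : ∀ (c : G.V) (w : G'.V), w ≠ x → q c = w → c = L w := by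
      intro c w hw hc
      have hcVJ : c ∉ VJ := fun hm => hw (by rw [← hc, hq2 c hm])
      exact hq4 c (L w) hcVJ (hLnot w hw) (by rw [hc, hqL])
    rcases h1 with ⟨h2, h3⟩ | ⟨h2, h3⟩
    · rw [haL a y hy h2, haL b z hz h3]
    · rw [haL a z hz h2, haL b y hy h3, Sym2.eq_swap]
  -- lifting a boundary edge
  have hbedge : ∀ (e' : G'.E) (y : G'.V), y ≠ x → G'.ends e' = s(y, x) →
      ∃ a, a ∈ VJ ∧ G.ends (ψ e') = s(L y, a) := by
    intro e' y hy he
    have h1 := hψends e'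
    rw [he] at h1
    obtain ⟨a, b, hab⟩ : ∃ a b, G.ends (ψ e') = s(a, b) :=
      Sym2.ind (fun a b => ⟨a, b, rfl⟩) (G.ends (ψ e'))
    rw [hab] at h1 ⊢
    rw [Sym2.map_pair_eq, Sym2.eq_iff] at h1
    have haL : ∀ (c : G.V), q c = y → c = L y := by
      intro c hc
      have hcVJ : c ∉ VJ := fun hm => hy (by rw [← hc, hq2 c hm])
      exact hq4 c (L y) hcVJ (hLnot y hy) (by rw [hc, hqL])
    have hVJ : ∀ (c : G.V), q c = x → c ∈ VJ := by
      intro c hc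
      by_contra hcon
      exact hq3 c hcon hc
    rcases h1 with ⟨h2, h3⟩ | ⟨h2, h3⟩
    · exact ⟨b, hVJ b h3, by rw [haL a h2]⟩
    · exact ⟨a, hVJ a h2, by rw [haL b h3, Sym2.eq_swap]⟩
  -- lifting walks which avoid `x`
  have hlift : ∀ {u' v' : G'.V} (W : G'.Walk u' v'), x ∉ W.support →
      ∃ Wg : G.Walk (L u') (L v'),
        (∀ e ∈ Wg.edges, ∃ e' ∈ W.edges, e = ψ e') ∧
        (∀ w ∈ Wg.support, ∃ y ∈ W.support, w = L y) := by
    intro u' v' W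
    induction W with
    | nil v =>
      intro _
      refine ⟨.nil (L v), by simp, ?_⟩
      intro w hw
      simp only [Walk.support_nil, List.mem_singleton] at hw
      exact ⟨v, by simp, hw⟩
    | cons e' h' W₂ ih =>
      rename_i y₁ z₁ v₁
      intro hx
      simp only [Walk.support_cons, List.mem_cons, not_or] at hx
      have hy : y₁ ≠ x := fun hc => hx.1 hc.symm
      have hz : z₁ ≠ x := fun hc => hx.2 (hc ▸ W₂.start_mem_support)
      obtain ⟨Wg₂, hWe, hWs⟩ := ih hx.2
      refine ⟨.cons (ψ e') (hedge e' y₁ z₁ hy hz h') Wg₂, ?_, ?_⟩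
      · intro e he
        simp only [Walk.edges_cons, List.mem_cons] at he ⊢
        rcases he with rfl | he
        · exact ⟨e', Or.inl rfl, rfl⟩
        · obtain ⟨e₂, he₂, rfl⟩ := hWe e he
          exact ⟨e₂, Or.inr he₂, rfl⟩
      · intro w hw
        simp only [Walk.support_cons, List.mem_cons] at hw ⊢
        rcases hw with rfl | hw
        · exact ⟨y₁, Or.inl rfl, rfl⟩
        · obtain ⟨y₂, hy₂, rfl⟩ := hWs w hw
          exact ⟨y₂, Or.inr hy₂, rfl⟩
  -- endpoints of the immersion paths are distinct
  have huv : ∀ f, (I'.pathEnds f).1 ≠ (I'.pathEnds f).2 := by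
    intro f hc
    have he := I'.ends_eq f
    obtain ⟨α, β, hαβ⟩ : ∃ α β, H.ends f = s(α, β) :=
      Sym2.ind (fun a b => ⟨a, b, rfl⟩) (H.ends f)
    have hnl := H.no_loops f
    rw [hαβ] at he hnl
    rw [Sym2.map_pair_eq, hc, Sym2.eq_iff] at he
    have hππ : I'.π α = I'.π β := by
      rcases he with ⟨h1, h2⟩ | ⟨h1, h2⟩ <;> rw [h1, h2]
    have hαβ' : α = β := I'.inj hππ
    rw [hαβ'] at hnl
    exact hnl (Sym2.mk_isDiag_iff.mpr rfl)
  -- skeleton construction for each edge of H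
  have hskel : ∀ f : H.E, ∃ t0 t1 : G.V, t0 ∈ VJ ∧ t1 ∈ VJ ∧
      ∀ (Q0 : G.Walk t0 b₀) (Q1 : G.Walk t1 b₀),
        (∀ e ∈ Q0.edges, e ∈ EJ) → (∀ e ∈ Q1.edges, e ∈ EJ) →
        (∀ w ∈ Q0.support, w ∈ VJ) → (∀ w ∈ Q1.support, w ∈ VJ) →
        ∃ W : G.Walk (L (I'.pathEnds f).1) (L (I'.pathEnds f).2),
          (∀ e ∈ W.edges,
            (∃ e' ∈ (I'.path f).edges, e = ψ e') ∨ e ∈ Q0.edges ∨ e ∈ Q1.edges) ∧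
          (∀ w ∈ W.support, (∃ y ∈ (I'.path f).support, w = L y) ∨ w ∈ VJ) ∧
          (b₀ ∈ W.support → x ∈ (I'.path f).support) := by
    intro f
    have hP : (I'.path f).IsPath := I'.isPath f
    by_cases hx : x ∈ (I'.path f).support
    · by_cases hxu : (I'.pathEnds f).1 = x
      · -- x is the start of the path
        have hv'x : (I'.pathEnds f).2 ≠ x := fun hc => (huv f) (hxu.trans hc.symm)
        obtain ⟨z, e1, W, h1, h2, h3, h4, h5⟩ := Walk.split_start (I'.path f) hP hxu hv'x
        have hzx : z ≠ x := by
          intro hc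
          have hdiag := G'.no_loops e1
          rw [h1, hc] at hdiag
          exact hdiag (Sym2.mk_isDiag_iff.mpr rfl)
        obtain ⟨a, haVJ, hae⟩ := hbedge e1 z hzx (by rw [h1, Sym2.eq_swap])
        refine ⟨a, b₀, haVJ, hb₀, ?_⟩
        intro Q0 Q1 hQ0E _ hQ0V _
        obtain ⟨Wg, hWe, hWs⟩ := hlift W h2
        obtain ⟨R, hRs, hRe⟩ := Walk.exists_reverse Q0
        have hends1 : G.ends (ψ e1) = s(a, L z) := by rw [hae, Sym2.eq_swap]
        refine ⟨(R.append (Walk.cons (ψ e1) hends1 Wg)).copy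
          (show b₀ = L (I'.pathEnds f).1 by rw [hxu, hLx]) rfl, ?_, ?_, fun _ => hx⟩
        · intro e he
          rw [Walk.edges_copy, Walk.edges_append] at he
          rcases List.mem_append.mp he with he | he
          · exact Or.inr (Or.inl ((hRe e).mp he))
          · rcases List.mem_cons.mp he with rfl | he
            · exact Or.inl ⟨e1, h3, rfl⟩
            · obtain ⟨e', he', rfl⟩ := hWe e he
              exact Or.inl ⟨e', h4 e' he', rfl⟩
        · intro w hw
          rw [Walk.support_copy, Walk.mem_support_append] at hw
          rcases hw with hw | hw
          · exact Or.inr (hQ0V w ((hRs w).mp hw))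
          · rcases List.mem_cons.mp hw with rfl | hw
            · exact Or.inr haVJ
            · obtain ⟨y, hy, rfl⟩ := hWs w hw
              exact Or.inl ⟨y, h5 y hy, rfl⟩
      · by_cases hxv : (I'.pathEnds f).2 = x
        · -- x is the end of the path
          obtain ⟨z, e2, W, h1, h2, h3, h4, h5⟩ := Walk.split_end (I'.path f) hP hxu hxv
          have hzx : z ≠ x := by
            intro hc
            have hdiag := G'.no_loops e2
            rw [h1, hc] at hdiag
            exact hdiag (Sym2.mk_isDiag_iff.mpr rfl)
          obtain ⟨a, haVJ, hae⟩ := hbedge e2 z hzx h1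
          refine ⟨b₀, a, hb₀, haVJ, ?_⟩
          intro Q0 Q1 _ hQ1E _ hQ1V
          obtain ⟨Wg, hWe, hWs⟩ := hlift W h2
          refine ⟨(Wg.append (Walk.cons (ψ e2) hae Q1)).copy rfl
            (show b₀ = L (I'.pathEnds f).2 by rw [hxv, hLx]), ?_, ?_, fun _ => hx⟩
          · intro e he
            rw [Walk.edges_copy, Walk.edges_append] at he
            rcases List.mem_append.mp he with he | he
            · obtain ⟨e', he', rfl⟩ := hWe e he
              exact Or.inl ⟨e', h4 e' he', rfl⟩
            · rcases List.mem_cons.mp he with rfl | he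
              · exact Or.inl ⟨e2, h3, rfl⟩
              · exact Or.inr (Or.inr he)
          · intro w hw
            rw [Walk.support_copy, Walk.mem_support_append] at hw
            rcases hw with hw | hw
            · obtain ⟨y, hy, rfl⟩ := hWs w hw
              exact Or.inl ⟨y, h5 y hy, rfl⟩
            · rcases List.mem_cons.mp hw with rfl | hw
              · exact Or.inl ⟨z, W.end_mem_support |> h5 z, rfl⟩
              · exact Or.inr (hQ1V w hw)
        · -- x is internal
          obtain ⟨y, z, e1, e2, W1, W2, h1, h2, h3, h4, h5, h6, h7, h8, h9, h10⟩ :=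
            Walk.split_mid (I'.path f) hP hxu hxv hx
          have hyx : y ≠ x := by
            intro hc
            have hdiag := G'.no_loops e1
            rw [h1, hc] at hdiag
            exact hdiag (Sym2.mk_isDiag_iff.mpr rfl)
          have hzx : z ≠ x := by
            intro hc
            have hdiag := G'.no_loops e2
            rw [h2, hc] at hdiag
            exact hdiag (Sym2.mk_isDiag_iff.mpr rfl)
          obtain ⟨a, haVJ, hae⟩ := hbedge e1 y hyx h1
          obtain ⟨c, hcVJ, hce⟩ := hbedge e2 z hzx (by rw [h2, Sym2.eq_swap])
          refine ⟨a, c, haVJ, hcVJ, ?_⟩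
          intro Q0 Q1 hQ0E hQ1E hQ0V hQ1V
          obtain ⟨Wg1, hWe1, hWs1⟩ := hlift W1 h3
          obtain ⟨Wg2, hWe2, hWs2⟩ := hlift W2 h4
          obtain ⟨R1, hR1s, hR1e⟩ := Walk.exists_reverse Q1
          have hce' : G.ends (ψ e2) = s(c, L z) := by rw [hce, Sym2.eq_swap]
          refine ⟨Wg1.append (Walk.cons (ψ e1) hae
            (Q0.append (R1.append (Walk.cons (ψ e2) hce' Wg2)))), ?_, ?_, fun _ => hx⟩
          · intro e he
            rw [Walk.edges_append] at he
            rcases List.mem_append.mp he with he | he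
            · obtain ⟨e', he', rfl⟩ := hWe1 e he
              exact Or.inl ⟨e', h7 e' he', rfl⟩
            · rcases List.mem_cons.mp he with rfl | he
              · exact Or.inl ⟨e1, h5, rfl⟩
              · rw [Walk.edges_append] at he
                rcases List.mem_append.mp he with he | he
                · exact Or.inr (Or.inl he)
                · rw [Walk.edges_append] at he
                  rcases List.mem_append.mp he with he | he
                  · exact Or.inr (Or.inr ((hR1e e).mp he))
                  · rcases List.mem_cons.mp he with rfl | he
                    · exact Or.inl ⟨e2, h6, rfl⟩
                    · obtain ⟨e', he', rfl⟩ := hWe2 e he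
                      exact Or.inl ⟨e', h8 e' he', rfl⟩
          · intro w hw
            rw [Walk.mem_support_append] at hw
            rcases hw with hw | hw
            · obtain ⟨y', hy', rfl⟩ := hWs1 w hw
              exact Or.inl ⟨y', h9 y' hy', rfl⟩
            · rcases List.mem_cons.mp hw with rfl | hw
              · exact Or.inl ⟨y, W1.end_mem_support |> h9 y, rfl⟩
              · rw [Walk.mem_support_append] at hw
                rcases hw with hw | hw
                · exact Or.inr (hQ0V w hw)
                · rw [Walk.mem_support_append] at hw
                  rcases hw with hw | hw
                  · exact Or.inr (hQ1V w ((hR1s w).mp hw))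
                  · rcases List.mem_cons.mp hw with rfl | hw
                    · exact Or.inr hcVJ
                    · obtain ⟨y', hy', rfl⟩ := hWs2 w hw
                      exact Or.inl ⟨y', h10 y' hy', rfl⟩
    · -- the path avoids x entirely
      refine ⟨b₀, b₀, hb₀, hb₀, ?_⟩
      intro Q0 Q1 _ _ _ _
      obtain ⟨Wg, hWe, hWs⟩ := hlift (I'.path f) hx
      refine ⟨Wg, fun e he => Or.inl (hWe e he), fun w hw => Or.inl (hWs w hw), ?_⟩
      intro hbw
      obtain ⟨y, hy1, hy2⟩ := hWs b₀ hbw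
      by_cases hyx : y = x
      · exact hyx ▸ hy1
      · exact absurd hb₀ (hy2 ▸ hLnot y hyx)
  -- choose the skeleton data
  choose t0 t1 ht0 ht1 hC using hskel
  haveI : Fintype H.E := Fintype.ofFinite _
  set n := Fintype.card (H.E × Bool) with hn
  set eqv : (H.E × Bool) ≃ Fin n := Fintype.equivFin _ with heqv
  set tfun : Fin n → G.V :=
    fun i => if (eqv.symm i).2 then t1 (eqv.symm i).1 else t0 (eqv.symm i).1 with htfun
  have htVJ : ∀ i, tfun i ∈ VJ := by
    intro i
    by_cases hb : (eqv.symm i).2 <;> simp only [htfun, hb, if_true, if_false] <;>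
      [exact ht1 _; exact ht0 _]
  have hnK : n ≤ 2 * Nat.card H.E := by
    rw [hn, Fintype.card_prod, Fintype.card_bool, Nat.card_eq_fintype_card]
    omega
  obtain ⟨Q, hQE, hQdisj⟩ := Flow.spider' EJ VJ b₀ (2 * Nat.card H.E) hJconn hb₀ n hnK
    tfun htVJ
  have hQt0 : ∀ f : H.E, tfun (eqv (f, false)) = t0 f := by
    intro f
    simp [htfun, Equiv.symm_apply_apply]
  have hQt1 : ∀ f : H.E, tfun (eqv (f, true)) = t1 f := by
    intro f
    simp [htfun, Equiv.symm_apply_apply]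
  set Q0 : ∀ f : H.E, G.Walk (t0 f) b₀ := fun f => (Q (eqv (f, false))).copy (hQt0 f) rfl
    with hQ0def
  set Q1 : ∀ f : H.E, G.Walk (t1 f) b₀ := fun f => (Q (eqv (f, true))).copy (hQt1 f) rfl
    with hQ1def
  have hQ0edges : ∀ f, (Q0 f).edges = (Q (eqv (f, false))).edges := by
    intro f; rw [hQ0def]; exact Walk.edges_copy _ _ _
  have hQ1edges : ∀ f, (Q1 f).edges = (Q (eqv (f, true))).edges := by
    intro f; rw [hQ1def]; exact Walk.edges_copy _ _ _
  have hQ0E : ∀ f, ∀ e ∈ (Q0 f).edges, e ∈ EJ := by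
    intro f e he
    rw [hQ0edges f] at he
    exact hQE _ e he
  have hQ1E : ∀ f, ∀ e ∈ (Q1 f).edges, e ∈ EJ := by
    intro f e he
    rw [hQ1edges f] at he
    exact hQE _ e he
  have hQ0V : ∀ f, ∀ w ∈ (Q0 f).support, w ∈ VJ :=
    fun f => Walk.support_subset_of_edges_subset VJ EJ hJsub (Q0 f) (ht0 f) (hQ0E f)
  have hQ1V : ∀ f, ∀ w ∈ (Q1 f).support, w ∈ VJ :=
    fun f => Walk.support_subset_of_edges_subset VJ EJ hJsub (Q1 f) (ht1 f) (hQ1E f)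
  have hWex := fun f => hC f (Q0 f) (Q1 f) (hQ0E f) (hQ1E f) (hQ0V f) (hQ1V f)
  choose Wc hW1 hW2 hW3 using hWex
  have hBex := fun f => Walk.exists_path (Wc f)
  choose B hBpath hBsupp hBedge using hBex
  -- assemble the immersion
  refine ⟨⟨L ∘ I'.π, hLinj.comp I'.inj,
    fun f => (L (I'.pathEnds f).1, L (I'.pathEnds f).2), B, ?_, hBpath, ?_⟩, ?_⟩
  · -- ends_eq
    intro f
    have h1 := I'.ends_eq f
    calc Sym2.map (L ∘ I'.π) (H.ends f)
        = Sym2.map L (Sym2.map I'.π (H.ends f)) := by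
          rw [Sym2.map_map]
    _ = Sym2.map L s((I'.pathEnds f).1, (I'.pathEnds f).2) := by rw [h1]
    _ = s(L (I'.pathEnds f).1, L (I'.pathEnds f).2) := Sym2.map_pair_eq L _ _
  · -- edge-disjointness
    intro f f' hff e hef hef'
    have h1 := hW1 f e (hBedge f e hef)
    have h2 := hW1 f' e (hBedge f' e hef')
    have hQmem : ∀ (g : H.E) (bb : Bool), e ∈ (Q (eqv (g, bb))).edges → e ∈ EJ :=
      fun g bb hh => hQE _ e hh
    rcases h1 with ⟨e1, he1, rfl⟩ | h1
    · -- e is a lifted edge of f's path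
      rcases h2 with ⟨e2, he2, heq⟩ | h2
      · have : e1 = e2 := hψinj heq
        exact I'.edge_disj f f' hff e1 he1 (this ▸ he2)
      · rcases h2 with h2 | h2
        · exact hψVJ e1 (hQ0E f' _ h2)
        · exact hψVJ e1 (hQ1E f' _ h2)
    · -- e lies in one of f's connector walks
      have hEJe : e ∈ EJ := by
        rcases h1 with h1 | h1
        · exact hQ0E f _ h1
        · exact hQ1E f _ h1
      rcases h2 with ⟨e2, he2, heq⟩ | h2
      · exact hψVJ e2 (heq ▸ hEJe)
      · -- both in connector walks: use flow disjointness
        have hidx : ∀ (b1 b2 : Bool), eqv (f, b1) ≠ eqv (f', b2) := by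
          intro b1 b2 hcon
          have := eqv.injective hcon
          exact hff (congrArg Prod.fst this)
        rcases h1 with h1 | h1 <;> rcases h2 with h2 | h2
        · exact hQdisj _ _ (hidx false false) e (by rwa [hQ0edges f] at h1)
            (by rwa [hQ0edges f'] at h2)
        · exact hQdisj _ _ (hidx false true) e (by rwa [hQ0edges f] at h1)
            (by rwa [hQ1edges f'] at h2)
        · exact hQdisj _ _ (hidx true false) e (by rwa [hQ1edges f] at h1)
            (by rwa [hQ0edges f'] at h2)
        · exact hQdisj _ _ (hidx true true) e (by rwa [hQ1edges f] at h1)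
            (by rwa [hQ1edges f'] at h2)
  · -- strongness
    intro f v hint
    simp only at hint
    have hBf := hBpath f
    have hw_supp : (L ∘ I'.π) v ∈ (B f).support :=
      Walk.internals_subset_support _ _ hint
    have hw_ne_u : (L ∘ I'.π) v ≠ L (I'.pathEnds f).1 := by
      intro hc
      rw [hc] at hint
      exact hBf.start_not_mem_internals hint
    have hw_ne_v : (L ∘ I'.π) v ≠ L (I'.pathEnds f).2 := by
      intro hc
      rw [hc] at hint
      exact hBf.end_not_mem_internals hint
    have hw_in_W : (L ∘ I'.π) v ∈ (Wc f).support := hBsupp f _ hw_supp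
    have hends : ∀ y : G'.V, y ∈ (I'.path f).support → L y = (L ∘ I'.π) v →
        y ∉ (I'.path f).internals → False := by
      intro y hy hLy hyint
      rcases Walk.mem_support_cases (I'.path f) y hy with rfl | rfl | hyi
      · exact hw_ne_u hLy.symm
      · exact hw_ne_v hLy.symm
      · exact hyint hyi
    rcases hW2 f _ hw_in_W with ⟨y, hy, hwy⟩ | hwVJ
    · have hπy : I'.π v = y := hLinj hwy
      exact hends y hy hwy.symm (hπy ▸ hstrong f v)
    · have hπx : I'.π v = x := by
        by_contra hcon
        exact hLnot _ hcon hwVJ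
      have hb₀w : (L ∘ I'.π) v = b₀ := by
        simp only [Function.comp_apply, hπx, hLx]
      have hxP : x ∈ (I'.path f).support := hW3 f (by rwa [← hb₀w])
      exact hends x hxP (by rw [← hπx]; rfl) (hπx ▸ hstrong f v)
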